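/- arXiv:2405.09677 — 2 statements merged into one kernel-verified Lean document; each statement's English description precedes it below -/
import Mathlib

section
/- Assume K ⊆ B̄_L (the closed ball of radius L centered at 0) and let δ, ε > 0 satisfy ε ≥ 4(1+√d)(L+1)δ. Set c_d = 1/(1+√d), and for k ∈ ℤ^d let Q_ε^k = c_d ε (k + [0,1)^d) and Z_ε = {k ∈ ℤ^d : the closure of Q_ε^k is contained in Ω}. For u ∈ L²(Ω) and k ∈ Z_ε let u^k be the average of u over Q_ε^k ∩ δE. Then Σ_{k ∈ Z_ε} ∫_{Q_ε^k ∩ δE} |u(x) − u^k|² dx ≤ 2^{d−1}(1+√d)^d |K|^{−1} ε² F_{δ,ε}(u). -/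
open MeasureTheory Filter Metric Set Pointwise
open scoped Topology ENNReal NNReal

noncomputable section

/-- The lattice point of `ℤ^d` inside `ℝ^d`. -/
def lat (d : ℕ) (k : Fin d → ℤ) : EuclideanSpace ℝ (Fin d) := WithLp.toLp 2 (fun i => (k i : ℝ))

/-- The periodic set `E = ⋃_{k ∈ ℤ^d} (k + K)`. -/
def latSet (d : ℕ) (K : Set (EuclideanSpace ℝ (Fin d))) : Set (EuclideanSpace ℝ (Fin d)) :=
  ⋃ k : Fin d → ℤ, (lat d k +ᵥ K)

/-- `K` is compact, the closure of a bounded connected open set, with negligible boundary,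
whose integer translates are pairwise disjoint. -/
def IsAdmissibleK (d : ℕ) (K : Set (EuclideanSpace ℝ (Fin d))) : Prop :=
  (∃ U : Set (EuclideanSpace ℝ (Fin d)),
      IsOpen U ∧ IsConnected U ∧ Bornology.IsBounded U ∧ K = closure U) ∧
  MeasureTheory.volume (frontier K) = 0 ∧
  ∀ k : Fin d → ℤ, k ≠ 0 → Disjoint (lat d k +ᵥ K) K

/-- `φ` is a radial kernel with nonincreasing nonnegative profile `φ₀` and finite
second moment. -/
def IsKernel (d : ℕ) (φ : EuclideanSpace ℝ (Fin d) → ℝ) (φ₀ : ℝ → ℝ) : Prop :=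
  (∀ t, 0 ≤ φ₀ t) ∧ AntitoneOn φ₀ (Set.Ici 0) ∧ (∀ ξ, φ ξ = φ₀ ‖ξ‖) ∧
  MeasureTheory.Integrable (fun ξ : EuclideanSpace ℝ (Fin d) => φ ξ * (1 + ‖ξ‖ ^ 2))

/-- The nonlocal functional `F^φ_{δ,ε}`. -/
def Fphi (d : ℕ) (φ : EuclideanSpace ℝ (Fin d) → ℝ) (Ω K : Set (EuclideanSpace ℝ (Fin d)))
    (δ ε : ℝ) (u : EuclideanSpace ℝ (Fin d) → ℝ) : ℝ :=
  (ε ^ (d + 2))⁻¹ * ∫ x in Ω ∩ δ • latSet d K, ∫ y in Ω ∩ δ • latSet d K,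
    φ (ε⁻¹ • (x - y)) * (u x - u y) ^ 2

/-- The nonlocal functional `F_{δ,ε}` with the truncation kernel `χ_{B₁}`. -/
def Fball (d : ℕ) (Ω K : Set (EuclideanSpace ℝ (Fin d))) (δ ε : ℝ)
    (u : EuclideanSpace ℝ (Fin d) → ℝ) : ℝ :=
  (ε ^ (d + 2))⁻¹ *
    ∫ p in ((Ω ∩ δ • latSet d K) ×ˢ (Ω ∩ δ • latSet d K)) ∩
      {p : EuclideanSpace ℝ (Fin d) × EuclideanSpace ℝ (Fin d) | dist p.1 p.2 < ε},
      (u p.1 - u p.2) ^ 2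

/-- The half-open unit cube `[0,1)^d`. -/
def cube01 (d : ℕ) : Set (EuclideanSpace ℝ (Fin d)) :=
  {x | ∀ i, 0 ≤ x i ∧ x i < 1}

/-- The cube `Q_ε^k = c_d ε (k + [0,1)^d)` with `c_d = (1+√d)⁻¹`. -/
def Qcube (d : ℕ) (ε : ℝ) (k : Fin d → ℤ) : Set (EuclideanSpace ℝ (Fin d)) :=
  ((1 + Real.sqrt d)⁻¹ * ε) • (lat d k +ᵥ cube01 d)

lemma mem_Qcube {d : ℕ} {ε : ℝ} (hr : 0 < (1 + Real.sqrt d)⁻¹ * ε) (k : Fin d → ℤ)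
    (x : EuclideanSpace ℝ (Fin d)) :
    x ∈ Qcube d ε k ↔ ∀ i, (1 + Real.sqrt d)⁻¹ * ε * k i ≤ x i ∧
      x i < (1 + Real.sqrt d)⁻¹ * ε * (k i + 1) := by
  set r := (1 + Real.sqrt d)⁻¹ * ε with hrdef
  rw [Qcube, mem_smul_set_iff_inv_smul_mem₀ hr.ne', Set.mem_vadd_set_iff_neg_vadd_mem]
  have hmem : (-lat d k +ᵥ r⁻¹ • x) ∈ cube01 d ↔ ∀ i, 0 ≤ -(k i : ℝ) + r⁻¹ * x i ∧
      -(k i : ℝ) + r⁻¹ * x i < 1 := Iff.rfl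
  rw [hmem]
  refine forall_congr' fun i => ?_
  constructor
  · rintro ⟨h1, h2⟩
    have hk : (k i : ℝ) ≤ r⁻¹ * x i := by linarith
    have hk2 : r⁻¹ * x i < (k i : ℝ) + 1 := by linarith
    have e1 := (le_inv_mul_iff₀ hr).1 hk
    have e2 := (inv_mul_lt_iff₀ hr).1 hk2
    exact ⟨e1, by linarith [e2]⟩
  · rintro ⟨h1, h2⟩
    have e1 : (k i : ℝ) ≤ r⁻¹ * x i := (le_inv_mul_iff₀ hr).2 h1
    have e2 : r⁻¹ * x i < (k i : ℝ) + 1 := (inv_mul_lt_iff₀ hr).2 (by linarith)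
    exact ⟨by linarith, by linarith⟩

lemma Qcube_measurableSet {d : ℕ} {ε : ℝ} (hr : 0 < (1 + Real.sqrt d)⁻¹ * ε) (k : Fin d → ℤ) :
    MeasurableSet (Qcube d ε k) := by
  have : Qcube d ε k = ⋂ i, (fun x : EuclideanSpace ℝ (Fin d) => x i) ⁻¹'
      (Set.Ico ((1 + Real.sqrt d)⁻¹ * ε * k i) ((1 + Real.sqrt d)⁻¹ * ε * (k i + 1))) := by
    ext x
    simp only [mem_Qcube hr, Set.mem_iInter, Set.mem_preimage, Set.mem_Ico]
  rw [this]
  exact MeasurableSet.iInter fun i =>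
    ((EuclideanSpace.proj i).continuous.measurable) measurableSet_Ico

lemma Qcube_disjoint {d : ℕ} {ε : ℝ} (hr : 0 < (1 + Real.sqrt d)⁻¹ * ε) {k k' : Fin d → ℤ}
    (h : k ≠ k') : Disjoint (Qcube d ε k) (Qcube d ε k') := by
  set r := (1 + Real.sqrt d)⁻¹ * ε with hrdef
  rw [Set.disjoint_left]
  intro x hx hx'
  obtain ⟨i, hi⟩ := Function.ne_iff.1 h
  obtain ⟨h1, h2⟩ := (mem_Qcube hr k x).1 hx i
  obtain ⟨h1', h2'⟩ := (mem_Qcube hr k' x).1 hx' i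
  rcases lt_or_gt_of_ne hi with hlt | hlt
  · have : ((k i : ℝ) + 1) ≤ (k' i : ℝ) := by exact_mod_cast hlt
    nlinarith [mul_le_mul_of_nonneg_left this hr.le]
  · have : ((k' i : ℝ) + 1) ≤ (k i : ℝ) := by exact_mod_cast hlt
    nlinarith [mul_le_mul_of_nonneg_left this hr.le]

lemma Qcube_dist_lt {d : ℕ} (hd : 1 ≤ d) {ε : ℝ} (hε : 0 < ε) (k : Fin d → ℤ)
    {x y : EuclideanSpace ℝ (Fin d)} (hx : x ∈ Qcube d ε k) (hy : y ∈ Qcube d ε k) :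
    dist x y < ε := by
  have hsd : (0:ℝ) ≤ Real.sqrt d := Real.sqrt_nonneg _
  have h1d : (0:ℝ) < 1 + Real.sqrt d := by linarith
  have hr : 0 < (1 + Real.sqrt d)⁻¹ * ε := by positivity
  set r := (1 + Real.sqrt d)⁻¹ * ε with hrdef
  have hcoord : ∀ i, dist (x i) (y i) ≤ r := by
    intro i
    obtain ⟨h1, h2⟩ := (mem_Qcube hr k x).1 hx i
    obtain ⟨h1', h2'⟩ := (mem_Qcube hr k y).1 hy i
    rw [Real.dist_eq, abs_le]
    constructor <;> nlinarith
  have : dist x y ≤ Real.sqrt (d * r ^ 2) := by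
    rw [EuclideanSpace.dist_eq]
    apply Real.sqrt_le_sqrt
    calc ∑ i, dist (x i) (y i) ^ 2 ≤ ∑ _i : Fin d, r ^ 2 := by
          refine Finset.sum_le_sum fun i _ => ?_
          have := hcoord i
          nlinarith [dist_nonneg (x := x i) (y := y i)]
      _ = d * r ^ 2 := by simp [Finset.sum_const, Finset.card_univ, mul_comm]
  have hs : Real.sqrt (d * r ^ 2) = Real.sqrt d * r := by
    rw [Real.sqrt_mul (by positivity), Real.sqrt_sq hr.le]
  rw [hs] at this
  refine this.trans_lt ?_
  have h2 : Real.sqrt d * r = (Real.sqrt d * (1 + Real.sqrt d)⁻¹) * ε := by ring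
  rw [h2]
  have : Real.sqrt d * (1 + Real.sqrt d)⁻¹ < 1 := by
    rw [mul_inv_lt_iff₀ h1d]
    linarith
  nlinarith
lemma lat_add (d : ℕ) (k l : Fin d → ℤ) : lat d (k + l) = lat d k + lat d l := by
  ext i
  simp [lat]

lemma latSet_vadd_disjoint {d : ℕ} {K : Set (EuclideanSpace ℝ (Fin d))}
    (hdisj : ∀ k : Fin d → ℤ, k ≠ 0 → Disjoint (lat d k +ᵥ K) K)
    {k k' : Fin d → ℤ} (h : k ≠ k') :
    Disjoint (lat d k +ᵥ K) (lat d k' +ᵥ K) := by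
  rw [Set.disjoint_left]
  rintro x hx hx'
  obtain ⟨a, ha, rfl⟩ := hx
  obtain ⟨b, hb, hab⟩ := hx'
  have hkk : k - k' ≠ 0 := sub_ne_zero.2 h
  have hmem : lat d k +ᵥ a = lat d k' +ᵥ b := hab.symm
  have h2 : lat d k' + b = lat d k + a := by simpa using hab
  have hlat : lat d (k - k') = lat d k - lat d k' := by
    have h3 := lat_add d (k - k') k'
    simp only [sub_add_cancel] at h3
    rw [h3]; abel
  have hb' : b = lat d (k - k') +ᵥ a := by
    rw [hlat, vadd_eq_add]
    calc b = lat d k + a - lat d k' := by rw [← h2]; abel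
      _ = lat d k - lat d k' + a := by abel
  have : b ∈ (lat d (k - k') +ᵥ K) ∩ K := ⟨⟨a, ha, hb'.symm⟩, hb⟩
  exact Set.disjoint_left.1 (hdisj _ hkk) this.1 this.2

lemma smul_disjoint {d : ℕ} {δ : ℝ} (hδ : δ ≠ 0) {s t : Set (EuclideanSpace ℝ (Fin d))}
    (h : Disjoint s t) : Disjoint (δ • s) (δ • t) := by
  rw [Set.disjoint_left] at h ⊢
  rintro x ⟨a, ha, rfl⟩ ⟨b, hb, hab⟩
  have : a = b := smul_right_injective _ hδ hab.symm
  exact h ha (this ▸ hb)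

lemma abs_coord_le_norm {d : ℕ} (z : EuclideanSpace ℝ (Fin d)) (i : Fin d) : |z i| ≤ ‖z‖ := by
  rw [EuclideanSpace.norm_eq]
  have : |z i| = Real.sqrt (|z i| ^ 2) := by
    rw [Real.sqrt_sq_eq_abs, abs_abs]
  rw [this]
  apply Real.sqrt_le_sqrt
  exact Finset.single_le_sum (f := fun j => |z j| ^ 2) (fun j _ => by positivity)
    (Finset.mem_univ i)

lemma counting_lower {d : ℕ} (hd : 1 ≤ d) {K : Set (EuclideanSpace ℝ (Fin d))}
    (hKcl : IsClosed K) (hKne : K.Nonempty)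
    (hdisj : ∀ k : Fin d → ℤ, k ≠ 0 → Disjoint (lat d k +ᵥ K) K)
    {L : ℝ} (hKL : K ⊆ Metric.closedBall 0 L)
    {δ ε : ℝ} (hδ : 0 < δ) (hε : 4 * (1 + Real.sqrt d) * (L + 1) * δ ≤ ε)
    (k : Fin d → ℤ) :
    ENNReal.ofReal (((1 + Real.sqrt d)⁻¹ * ε / 2) ^ d) * volume K ≤
      volume (Qcube d ε k ∩ δ • latSet d K) := by
  have hsd : (0:ℝ) ≤ Real.sqrt d := Real.sqrt_nonneg _
  have h1d : (0:ℝ) < 1 + Real.sqrt d := by linarith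
  have hL0 : 0 ≤ L := by
    obtain ⟨z, hz⟩ := hKne
    have := hKL hz
    rw [Metric.mem_closedBall] at this
    exact le_trans dist_nonneg this
  set r := (1 + Real.sqrt d)⁻¹ * ε with hrdef
  have hrs : 4 * (L + 1) * δ ≤ r := by
    rw [hrdef, le_inv_mul_iff₀ h1d]
    calc (1 + Real.sqrt d) * (4 * (L + 1) * δ) = 4 * (1 + Real.sqrt d) * (L + 1) * δ := by ring
      _ ≤ ε := hε
  have hr : 0 < r := lt_of_lt_of_le (by positivity) hrs
  -- the number of cells per axis
  set M : ℕ := ⌈r / (2 * δ)⌉₊ with hMdef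
  have hM1 : r / (2 * δ) ≤ M := Nat.le_ceil _
  have hM2 : (M : ℝ) < r / (2 * δ) + 1 := Nat.ceil_lt_add_one (by positivity)
  set c : Fin d → ℤ := fun i => ⌈r * k i / δ + L⌉ with hcdef
  set f : (Fin d → Fin M) → (Fin d → ℤ) := fun m i => c i + m i with hfdef
  have hfinj : Function.Injective f := by
    intro m m' hmm
    funext i
    have := congrFun hmm i
    simp only [hfdef, add_right_inj] at this
    exact Fin.ext (by exact_mod_cast this)
  set B : (Fin d → Fin M) → Set (EuclideanSpace ℝ (Fin d)) :=
    fun m => δ • (lat d (f m) +ᵥ K) with hBdef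
  have hBsub : ∀ m, B m ⊆ Qcube d ε k ∩ δ • latSet d K := by
    intro m
    refine subset_inter ?_ ?_
    · rintro x ⟨y, ⟨z, hz, rfl⟩, rfl⟩
      show δ • (lat d (f m) +ᵥ z) ∈ Qcube d ε k
      rw [mem_Qcube (by positivity) k]
      intro i
      have hzi : |z i| ≤ L := by
        refine le_trans (abs_coord_le_norm z i) ?_
        have := hKL hz
        rwa [Metric.mem_closedBall, dist_zero_right] at this
      have hzi1 : -L ≤ z i := by cases abs_le.1 hzi; assumption
      have hzi2 : z i ≤ L := by cases abs_le.1 hzi; assumption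
      have hcoord : (δ • (lat d (f m) +ᵥ z)) i = δ * ((c i : ℝ) + (m i : ℝ) + z i) := by
        simp only [PiLp.smul_apply, smul_eq_mul]
        congr 1
        show lat d (f m) i + z i = (c i : ℝ) + (m i : ℝ) + z i
        simp [lat, hfdef]
      rw [hcoord, ← hrdef]
      have hc1 : r * k i / δ + L ≤ (c i : ℝ) := Int.le_ceil _
      have hc2 : (c i : ℝ) < r * k i / δ + L + 1 := Int.ceil_lt_add_one _
      have hmi1 : (0:ℝ) ≤ (m i : ℝ) := by positivity
      have hmi2 : ((m i : ℕ) : ℝ) ≤ (M : ℝ) - 1 := by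
        have h' : ((m i : ℕ) : ℝ) + 1 ≤ (M : ℝ) := by
          exact_mod_cast Nat.succ_le_of_lt (m i).2
        linarith
      have hMδ : δ * (M : ℝ) < r / 2 + δ := by
        have h9 := mul_lt_mul_of_pos_left hM2 hδ
        calc δ * (M : ℝ) < δ * (r / (2 * δ) + 1) := h9
          _ = r / 2 + δ := by field_simp
      constructor
      · have h2 : r * k i / δ ≤ (c i : ℝ) + ((m i : ℕ) : ℝ) + z i := by linarith
        calc r * (k i : ℝ) = δ * (r * k i / δ) := by field_simp
          _ ≤ δ * ((c i : ℝ) + ((m i : ℕ) : ℝ) + z i) := mul_le_mul_of_nonneg_left h2 hδ.le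
      · have h2 : (c i : ℝ) + ((m i : ℕ) : ℝ) + z i < r * k i / δ + 2 * L + (M : ℝ) := by
          linarith
        have h3 := mul_lt_mul_of_pos_left h2 hδ
        have h6 : 2 * L * δ + δ ≤ r / 2 := by nlinarith
        have h7 : δ * (r * k i / δ + 2 * L + (M : ℝ)) =
            r * k i + 2 * L * δ + δ * (M : ℝ) := by field_simp
        have h8 : δ * ((c i : ℝ) + ((m i : ℕ) : ℝ) + z i) < r * k i + r := by
          rw [h7] at h3; linarith
        calc δ * ((c i : ℝ) + ((m i : ℕ) : ℝ) + z i) < r * k i + r := h8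
          _ = r * ((k i : ℝ) + 1) := by ring
    · refine (Set.smul_set_mono ?_).trans (subset_refl _)
      exact Set.subset_iUnion (fun k' => lat d k' +ᵥ K) (f m)
  have hBdisj : (↑(Finset.univ : Finset (Fin d → Fin M)) : Set (Fin d → Fin M)).PairwiseDisjoint B := by
    intro m _ m' _ hmm
    exact smul_disjoint hδ.ne' (latSet_vadd_disjoint hdisj fun h => hmm (hfinj h))
  have hBmeas : ∀ m, MeasurableSet (B m) := fun m =>
    ((hKcl.vadd (lat d (f m))).smul_of_ne_zero hδ.ne').measurableSet
  have hBvol : ∀ m, volume (B m) = ENNReal.ofReal (δ ^ d) * volume K := by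
    intro m
    rw [hBdef]
    simp only
    rw [Measure.addHaar_smul volume, measure_vadd, finrank_euclideanSpace_fin,
      abs_of_pos (by positivity)]
  calc ENNReal.ofReal ((r / 2) ^ d) * volume K
      ≤ ENNReal.ofReal ((M * δ) ^ d) * volume K := by
        have hle : r / 2 ≤ (M : ℝ) * δ := by
          rw [div_le_iff₀ (by positivity : (0:ℝ) < 2 * δ)] at hM1
          linarith
        have hpow : ((r / 2) ^ d : ℝ) ≤ ((M : ℝ) * δ) ^ d :=
          pow_le_pow_left₀ (by positivity) hle d
        exact mul_le_mul_left (ENNReal.ofReal_le_ofReal hpow) _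
    _ = (M ^ d : ℕ) * (ENNReal.ofReal (δ ^ d) * volume K) := by
        rw [mul_pow, ENNReal.ofReal_mul (by positivity), ENNReal.ofReal_pow (by positivity)]
        rw [← mul_assoc]
        congr 1
        rw [Nat.cast_pow]
        congr 1
        rw [ENNReal.ofReal_natCast]
    _ = ∑ m : Fin d → Fin M, volume (B m) := by
        simp only [hBvol, Finset.sum_const, Finset.card_univ, Fintype.card_fun,
          Fintype.card_fin, nsmul_eq_mul]
    _ = volume (⋃ m ∈ (Finset.univ : Finset (Fin d → Fin M)), B m) :=
        (measure_biUnion_finset hBdisj fun m _ => hBmeas m).symm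
    _ ≤ volume (Qcube d ε k ∩ δ • latSet d K) := by
        apply measure_mono
        simp only [Set.iUnion_subset_iff]
        exact fun m _ => hBsub m

lemma var_bound {α : Type*} [MeasureSpace α] [SigmaFinite (volume : Measure α)]
    {A : Set α} (h0 : volume A ≠ 0) (hfin : volume A ≠ ⊤)
    {u : α → ℝ} (hu : MemLp u 2 (volume.restrict A)) :
    ∫ x in A, (u x - ⨍ y in A, u y) ^ 2 ≤
      (2 * (volume A).toReal)⁻¹ * ∫ p in A ×ˢ A, (u p.1 - u p.2) ^ 2 := by
  haveI : IsFiniteMeasure (volume.restrict A) :=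
    ⟨by rwa [Measure.restrict_apply_univ, lt_top_iff_ne_top]⟩
  set a := (volume A).toReal with ha_def
  have ha : 0 < a := ENNReal.toReal_pos h0 hfin
  set m := ⨍ y in A, u y with hm
  set v : α → ℝ := fun x => u x - m with hv
  have hv2mem : MemLp v 2 (volume.restrict A) := hu.sub (memLp_const m)
  have hv1 : Integrable v (volume.restrict A) := hv2mem.integrable one_le_two
  have hv2 : Integrable (fun x => v x ^ 2) (volume.restrict A) := hv2mem.integrable_sq
  have hu1 : Integrable u (volume.restrict A) := hu.integrable one_le_two
  have hvint : ∫ x in A, v x = 0 := by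
    have : ∫ x in A, v x = (∫ x in A, u x) - a * m := by
      rw [hv]
      rw [integral_sub hu1 (integrable_const m), integral_const,
        measureReal_restrict_apply_univ, measureReal_def, smul_eq_mul]
    rw [this, hm, setAverage_eq, smul_eq_mul, measureReal_def, ← ha_def]
    field_simp
    simp
  have hme : (volume : Measure (α × α)).restrict (A ×ˢ A) =
      (volume.restrict A).prod (volume.restrict A) := by
    rw [Measure.volume_eq_prod, Measure.prod_restrict]
  have hprod : ∫ p in A ×ˢ A, (u p.1 - u p.2) ^ 2 = 2 * a * ∫ x in A, v x ^ 2 := by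
    rw [hme]
    have e : (fun p : α × α => (u p.1 - u p.2) ^ 2) =
        fun p : α × α => v p.1 ^ 2 * 1 + 1 * v p.2 ^ 2 - 2 * (v p.1 * v p.2) := by
      funext p; simp only [hv]; ring
    rw [e]
    have H1 : Integrable (fun p : α × α => v p.1 ^ 2 * 1)
        ((volume.restrict A).prod (volume.restrict A)) := hv2.mul_prod (integrable_const 1)
    have H2 : Integrable (fun p : α × α => 1 * v p.2 ^ 2)
        ((volume.restrict A).prod (volume.restrict A)) := (integrable_const 1).mul_prod hv2
    have H3 : Integrable (fun p : α × α => v p.1 * v p.2)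
        ((volume.restrict A).prod (volume.restrict A)) := hv1.mul_prod hv1
    have H12 : Integrable (fun p : α × α => v p.1 ^ 2 * 1 + 1 * v p.2 ^ 2)
        ((volume.restrict A).prod (volume.restrict A)) := H1.add H2
    have H3' : Integrable (fun p : α × α => 2 * (v p.1 * v p.2))
        ((volume.restrict A).prod (volume.restrict A)) := H3.const_mul 2
    have E1 : ∫ p : α × α, v p.1 ^ 2 * 1 ∂((volume.restrict A).prod (volume.restrict A)) =
        (∫ x in A, v x ^ 2) * ∫ _x in A, (1:ℝ) :=
      integral_prod_mul (fun x => v x ^ 2) (fun _ => (1:ℝ))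
    have E2 : ∫ p : α × α, 1 * v p.2 ^ 2 ∂((volume.restrict A).prod (volume.restrict A)) =
        (∫ _x in A, (1:ℝ)) * ∫ x in A, v x ^ 2 :=
      integral_prod_mul (fun _ => (1:ℝ)) (fun x => v x ^ 2)
    have E3 : ∫ p : α × α, v p.1 * v p.2 ∂((volume.restrict A).prod (volume.restrict A)) =
        (∫ x in A, v x) * ∫ x in A, v x := integral_prod_mul v v
    have Econst : ∫ _x in A, (1:ℝ) = a := by
      rw [integral_const, measureReal_restrict_apply_univ, measureReal_def, smul_eq_mul, mul_one]
    rw [integral_sub H12 H3', integral_add H1 H2, E1, E2, integral_const_mul, E3, hvint,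
      Econst]
    ring
  have hLHS : ∫ x in A, (u x - m) ^ 2 = ∫ x in A, v x ^ 2 := rfl
  rw [hLHS, hprod, ← mul_assoc]
  have : (2 * a)⁻¹ * (2 * a) = 1 := by
    field_simp
  rw [this, one_mul]


/-- Poincaré-type estimate for the coarse-grained averages. -/
theorem stmt_9 (d : ℕ) (hd : 1 ≤ d)
    (K : Set (EuclideanSpace ℝ (Fin d))) (hK : IsAdmissibleK d K)
    (Ω : Set (EuclideanSpace ℝ (Fin d))) (hΩo : IsOpen Ω) (hΩb : Bornology.IsBounded Ω)
    (L : ℝ) (hKL : K ⊆ Metric.closedBall 0 L)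
    (δ ε : ℝ) (hδ : 0 < δ) (hε : 4 * (1 + Real.sqrt d) * (L + 1) * δ ≤ ε)
    (u : EuclideanSpace ℝ (Fin d) → ℝ) (hu : MemLp u 2 (volume.restrict Ω)) :
    ∑' k : {k : Fin d → ℤ // closure (Qcube d ε k) ⊆ Ω},
        ∫ x in Qcube d ε k.1 ∩ δ • latSet d K,
          (u x - ⨍ y in Qcube d ε k.1 ∩ δ • latSet d K, u y) ^ 2
      ≤ (2:ℝ) ^ ((d:ℤ) - 1) * (1 + Real.sqrt d) ^ d * ((volume K).toReal)⁻¹ * ε ^ 2 *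
          Fball d Ω K δ ε u := by
  classical
  obtain ⟨⟨U, hUo, hUconn, hUb, hKU⟩, hfr, hdisj⟩ := hK
  have hKcl : IsClosed K := hKU ▸ isClosed_closure
  have hKne : K.Nonempty := hKU ▸ hUconn.nonempty.closure
  have hKb : Bornology.IsBounded K := hKU ▸ hUb.closure
  have hsd : (0:ℝ) ≤ Real.sqrt d := Real.sqrt_nonneg _
  have h1d : (0:ℝ) < 1 + Real.sqrt d := by linarith
  have hL0 : 0 ≤ L := by
    obtain ⟨z, hz⟩ := hKne
    have := hKL hz
    rw [Metric.mem_closedBall] at this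
    exact le_trans dist_nonneg this
  have hε0 : 0 < ε := lt_of_lt_of_le (by positivity) hε
  set r := (1 + Real.sqrt d)⁻¹ * ε with hrdef
  have hr : 0 < r := by positivity
  have hK0 : volume K ≠ 0 := by
    have hU0 : 0 < volume U := hUo.measure_pos volume hUconn.nonempty
    have hsub : U ⊆ K := hKU ▸ subset_closure
    exact (lt_of_lt_of_le hU0 (measure_mono hsub)).ne'
  have hKfin : volume K ≠ ⊤ := hKb.measure_lt_top.ne
  have hKtR : 0 < (volume K).toReal := ENNReal.toReal_pos hK0 hKfin
  have hEm : MeasurableSet (δ • latSet d K) := by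
    rw [latSet, Set.smul_set_iUnion]
    exact MeasurableSet.iUnion fun k =>
      ((hKcl.vadd (lat d k)).smul_of_ne_zero hδ.ne').measurableSet
  set A : (Fin d → ℤ) → Set (EuclideanSpace ℝ (Fin d)) :=
    fun k => Qcube d ε k ∩ δ • latSet d K with hAdef
  have hAm : ∀ k, MeasurableSet (A k) := fun k => (Qcube_measurableSet hr k).inter hEm
  haveI : IsFiniteMeasure (volume.restrict Ω) :=
    ⟨by rw [Measure.restrict_apply_univ]; exact hΩb.measure_lt_top⟩
  have hu1 : Integrable u (volume.restrict Ω) := hu.integrable one_le_two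
  have hu2 : Integrable (fun x => u x ^ 2) (volume.restrict Ω) := hu.integrable_sq
  have hmeΩ : (volume : Measure (EuclideanSpace ℝ (Fin d) × EuclideanSpace ℝ (Fin d))).restrict
      (Ω ×ˢ Ω) = (volume.restrict Ω).prod (volume.restrict Ω) := by
    rw [Measure.volume_eq_prod, Measure.prod_restrict]
  have gInt : IntegrableOn
      (fun p : EuclideanSpace ℝ (Fin d) × EuclideanSpace ℝ (Fin d) => (u p.1 - u p.2) ^ 2)
      (Ω ×ˢ Ω) volume := by
    rw [IntegrableOn, hmeΩ]
    have e : (fun p : EuclideanSpace ℝ (Fin d) × EuclideanSpace ℝ (Fin d) =>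
        (u p.1 - u p.2) ^ 2) =
        fun p => u p.1 ^ 2 * 1 + 1 * u p.2 ^ 2 - 2 * (u p.1 * u p.2) := by
      funext p; ring
    rw [e]
    have H12 : Integrable
        (fun p : EuclideanSpace ℝ (Fin d) × EuclideanSpace ℝ (Fin d) =>
          u p.1 ^ 2 * 1 + 1 * u p.2 ^ 2) ((volume.restrict Ω).prod (volume.restrict Ω)) :=
      (hu2.mul_prod (integrable_const 1)).add ((integrable_const 1).mul_prod hu2)
    exact H12.sub ((hu1.mul_prod hu1).const_mul 2)
  set R := ((Ω ∩ δ • latSet d K) ×ˢ (Ω ∩ δ • latSet d K)) ∩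
      {p : EuclideanSpace ℝ (Fin d) × EuclideanSpace ℝ (Fin d) | dist p.1 p.2 < ε} with hRdef
  have hRsub : R ⊆ Ω ×ˢ Ω := fun p hp => ⟨hp.1.1.1, hp.1.2.1⟩
  have gIntR : IntegrableOn
      (fun p : EuclideanSpace ℝ (Fin d) × EuclideanSpace ℝ (Fin d) => (u p.1 - u p.2) ^ 2)
      R volume := gInt.mono_set hRsub
  set IR := ∫ p in R, (u p.1 - u p.2) ^ 2 with hIRdef
  have hIR0 : 0 ≤ IR := integral_nonneg fun p => sq_nonneg _
  set m₀ := (r / 2) ^ d * (volume K).toReal with hm₀def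
  have hm₀ : 0 < m₀ := by positivity
  have hRHS : (2:ℝ) ^ ((d:ℤ) - 1) * (1 + Real.sqrt d) ^ d * ((volume K).toReal)⁻¹ * ε ^ 2 *
      Fball d Ω K δ ε u = (2 * m₀)⁻¹ * IR := by
    have hFb : Fball d Ω K δ ε u = (ε ^ (d + 2))⁻¹ * IR := rfl
    rw [hFb]
    have h2 : (2:ℝ) ^ ((d:ℤ) - 1) = 2 ^ d / 2 := by
      rw [zpow_sub₀ (two_ne_zero), zpow_natCast, zpow_one]
    rw [h2, hm₀def, hrdef]
    rw [show ((1 + Real.sqrt d)⁻¹ * ε / 2) ^ d = ε ^ d / ((1 + Real.sqrt d) ^ d * 2 ^ d) by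
      rw [div_pow, mul_pow, inv_pow]; field_simp]
    rw [pow_add]
    field_simp
  -- the subtype of good cubes
  have hAΩ : ∀ k : {k : Fin d → ℤ // closure (Qcube d ε k) ⊆ Ω}, A k.1 ⊆ Ω :=
    fun k x hx => k.2 (subset_closure hx.1)
  have hAfin : ∀ k : {k : Fin d → ℤ // closure (Qcube d ε k) ⊆ Ω}, volume (A k.1) ≠ ⊤ :=
    fun k => ((measure_mono (hAΩ k)).trans_lt hΩb.measure_lt_top).ne
  have hlow : ∀ kk : Fin d → ℤ,
      ENNReal.ofReal ((r / 2) ^ d) * volume K ≤ volume (A kk) := by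
    intro kk
    rw [hrdef]
    exact counting_lower hd hKcl hKne hdisj hKL hδ hε kk
  have hA0 : ∀ kk : Fin d → ℤ, volume (A kk) ≠ 0 := by
    intro kk h
    have h1 := (hlow kk).trans_eq h
    rw [le_zero_iff, mul_eq_zero] at h1
    rcases h1 with h1 | h1
    · rw [ENNReal.ofReal_eq_zero] at h1
      nlinarith [pow_pos (by positivity : (0:ℝ) < r / 2) d]
    · exact hK0 h1
  have htR : ∀ k : {k : Fin d → ℤ // closure (Qcube d ε k) ⊆ Ω},
      m₀ ≤ (volume (A k.1)).toReal := by
    intro k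
    have h1 : (ENNReal.ofReal ((r / 2) ^ d) * volume K).toReal = m₀ := by
      rw [ENNReal.toReal_mul, ENNReal.toReal_ofReal (by positivity), hm₀def]
    rw [← h1]
    exact ENNReal.toReal_mono (hAfin k) (hlow k.1)
  have huA : ∀ k : {k : Fin d → ℤ // closure (Qcube d ε k) ⊆ Ω},
      MemLp u 2 (volume.restrict (A k.1)) := by
    intro k
    have h := hu.restrict (A k.1)
    rwa [Measure.restrict_restrict (hAm k.1), Set.inter_eq_self_of_subset_left (hAΩ k)] at h
  have key : ∀ S : Finset {k : Fin d → ℤ // closure (Qcube d ε k) ⊆ Ω},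
      ∑ k ∈ S, (∫ x in A k.1, (u x - ⨍ y in A k.1, u y) ^ 2) ≤ (2 * m₀)⁻¹ * IR := by
    intro S
    have hterm : ∀ k ∈ S, (∫ x in A k.1, (u x - ⨍ y in A k.1, u y) ^ 2) ≤
        (2 * m₀)⁻¹ * ∫ p in (A k.1) ×ˢ (A k.1), (u p.1 - u p.2) ^ 2 := by
      intro k _
      refine (var_bound (hA0 k.1) (hAfin k) (huA k)).trans ?_
      have hTnn : 0 ≤ ∫ p in (A k.1) ×ˢ (A k.1), (u p.1 - u p.2) ^ 2 :=
        integral_nonneg fun p => sq_nonneg _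
      refine mul_le_mul_of_nonneg_right ?_ hTnn
      have h2 : 2 * m₀ ≤ 2 * (volume (A k.1)).toReal := by linarith [htR k]
      exact inv_anti₀ (by positivity) h2
    calc ∑ k ∈ S, (∫ x in A k.1, (u x - ⨍ y in A k.1, u y) ^ 2)
        ≤ ∑ k ∈ S, (2 * m₀)⁻¹ * ∫ p in (A k.1) ×ˢ (A k.1), (u p.1 - u p.2) ^ 2 :=
          Finset.sum_le_sum hterm
      _ = (2 * m₀)⁻¹ * ∑ k ∈ S, ∫ p in (A k.1) ×ˢ (A k.1), (u p.1 - u p.2) ^ 2 := by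
          rw [Finset.mul_sum]
      _ ≤ (2 * m₀)⁻¹ * IR := by
          refine mul_le_mul_of_nonneg_left ?_ (by positivity)
          have hPm : ∀ k ∈ S, MeasurableSet ((A k.1) ×ˢ (A k.1)) :=
            fun k _ => (hAm k.1).prod (hAm k.1)
          have hdisjP : (↑S : Set {k : Fin d → ℤ // closure (Qcube d ε k) ⊆ Ω}).Pairwise
              (Function.onFun Disjoint fun k => (A k.1) ×ˢ (A k.1)) := by
            intro k _ k' _ hkk
            have hne : k.1 ≠ k'.1 := fun h => hkk (Subtype.ext h)
            exact Set.Disjoint.set_prod_left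
              ((Qcube_disjoint hr hne).mono inter_subset_left inter_subset_left) _ _
          have hPint : ∀ k ∈ S, IntegrableOn
              (fun p : EuclideanSpace ℝ (Fin d) × EuclideanSpace ℝ (Fin d) =>
                (u p.1 - u p.2) ^ 2) ((A k.1) ×ˢ (A k.1)) volume :=
            fun k _ => gInt.mono_set (Set.prod_mono (hAΩ k) (hAΩ k))
          rw [← integral_biUnion_finset S hPm hdisjP hPint]
          refine setIntegral_mono_set gIntR (ae_of_all _ fun p => sq_nonneg _)
            (HasSubset.Subset.eventuallyLE ?_)
          intro p hp
          simp only [Set.mem_iUnion] at hp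
          obtain ⟨k, _, hk⟩ := hp
          refine ⟨⟨⟨hAΩ k hk.1, hk.1.2⟩, ⟨hAΩ k hk.2, hk.2.2⟩⟩, ?_⟩
          exact Qcube_dist_lt hd hε0 k.1 hk.1.1 hk.2.1
  rw [hRHS]
  by_cases hsum : Summable (fun k : {k : Fin d → ℤ // closure (Qcube d ε k) ⊆ Ω} =>
      ∫ x in A k.1, (u x - ⨍ y in A k.1, u y) ^ 2)
  · exact Summable.tsum_le_of_sum_le hsum key
  · rw [tsum_eq_zero_of_not_summable hsum]
    positivity
end
end

section
/- Let M be a positive integer and let w : ℝ^d → ℝ be a measurable, ℤ^d-periodic, locally square-integrable function. Define w̃(x) = M^{−d} Σ_{k ∈ {0,…,M−1}^d} w(x + k/M), which is (1/M)ℤ^d-periodic. Then for every r > 0 and every ξ ∈ ℝ^d: ∬_{{(x,y) ∈ ([0,1/M)^d ∩ (E/M)) × (E/M) : |x−y| < r}} ( w̃(x) − w̃(y) + ξ·(x−y) )² dx dy ≤ M^{−d} ∬_{{(x,y) ∈ ([0,1)^d ∩ (E/M)) × (E/M) : |x−y| < r}} ( w(x) − w(y) + ξ·(x−y) )² dx dy.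 -/
open MeasureTheory Filter Metric Set Pointwise
open scoped Topology ENNReal NNReal

noncomputable section

/-- The half-open cube `[0,s)^d`. -/
def cubeS (d : ℕ) (s : ℝ) : Set (EuclideanSpace ℝ (Fin d)) :=
  {x | ∀ i, 0 ≤ x i ∧ x i < s}

/-! ### Auxiliary lemmas for `stmt_12` -/

section Stmt12Aux

lemma stmt12_aux_floor (M : ℕ) (hM : 0 < M) (x : ℝ) (h0 : 0 ≤ x) (h1 : x < 1) :
    ∃ n : ℕ, n < M ∧ (n : ℝ) * (M:ℝ)⁻¹ ≤ x ∧ x < ((n : ℝ) + 1) * (M:ℝ)⁻¹ := by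
  have hMR : (0:ℝ) < M := by exact_mod_cast hM
  have hnn : 0 ≤ ⌊x * M⌋ := Int.floor_nonneg.mpr (by positivity)
  have h2 : (⌊x * M⌋ : ℝ) ≤ x * M := Int.floor_le _
  have h5 : x * M < (⌊x * M⌋ : ℝ) + 1 := Int.lt_floor_add_one _
  have hc : ((⌊x * M⌋.toNat : ℕ) : ℝ) = ((⌊x * M⌋ : ℤ) : ℝ) := by
    exact_mod_cast Int.toNat_of_nonneg hnn
  refine ⟨(⌊x * M⌋).toNat, ?_, ?_, ?_⟩
  · have h3 : x * M < M := by nlinarith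
    have h4 : ⌊x * M⌋ < (M : ℤ) := Int.floor_lt.mpr (by push_cast; linarith)
    omega
  · rw [hc, ← div_eq_mul_inv, div_le_iff₀ hMR]; linarith
  · rw [hc, ← div_eq_mul_inv, lt_div_iff₀ hMR]; linarith

lemma stmt12_aux_unique (n m : ℕ) (x c : ℝ) (hc : 0 < c)
    (h1 : (n:ℝ) * c ≤ x) (h2 : x < ((n:ℝ)+1) * c)
    (h3 : (m:ℝ) * c ≤ x) (h4 : x < ((m:ℝ)+1) * c) : n = m := by
  have a1 : (n:ℝ) < (m:ℝ) + 1 := by nlinarith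
  have a2 : (m:ℝ) < (n:ℝ) + 1 := by nlinarith
  have b1 : n < m + 1 := by exact_mod_cast a1
  have b2 : m < n + 1 := by exact_mod_cast a2
  omega

/-- The translation vector `k/M`. -/
def stau (d M : ℕ) (k : Fin d → Fin M) : EuclideanSpace ℝ (Fin d) :=
  (M:ℝ)⁻¹ • lat d (fun i => (k i : ℤ))

lemma stau_apply (d M : ℕ) (k : Fin d → Fin M) (i : Fin d) :
    stau d M k i = ((k i : ℕ) : ℝ) * (M:ℝ)⁻¹ := by
  show (M:ℝ)⁻¹ * ((lat d fun i => (k i : ℤ)) i) = _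
  simp [lat, mul_comm]

lemma stmt12_mem_vadd_cube (d M : ℕ) (k : Fin d → Fin M) (x : EuclideanSpace ℝ (Fin d)) :
    x ∈ (stau d M k +ᵥ cubeS d ((M:ℝ)⁻¹)) ↔
    ∀ i, ((k i : ℕ) : ℝ) * (M:ℝ)⁻¹ ≤ x i ∧ x i < (((k i : ℕ) : ℝ) + 1) * (M:ℝ)⁻¹ := by
  rw [mem_vadd_set_iff_neg_vadd_mem]
  have hmem : (-(stau d M k) +ᵥ x ∈ cubeS d ((M:ℝ)⁻¹)) ↔
      ∀ i, 0 ≤ -(stau d M k i) + x i ∧ -(stau d M k i) + x i < (M:ℝ)⁻¹ := Iff.rfl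
  rw [hmem]
  refine forall_congr' fun i => ?_
  rw [stau_apply]
  constructor <;> rintro ⟨h1, h2⟩ <;> constructor <;> nlinarith [h1, h2]

lemma stmt12_cube_decomp (d M : ℕ) (hM : 0 < M) :
    (⋃ k : Fin d → Fin M, (stau d M k +ᵥ cubeS d ((M:ℝ)⁻¹))) = cubeS d 1 := by
  have hMR : (0:ℝ) < M := by exact_mod_cast hM
  ext x
  simp only [mem_iUnion, stmt12_mem_vadd_cube]
  constructor
  · rintro ⟨k, hk⟩ i
    obtain ⟨h1, h2⟩ := hk i
    have hkM : ((k i : ℕ) : ℝ) + 1 ≤ M := by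
      have := (k i).isLt; exact_mod_cast this
    constructor
    · nlinarith [(k i).isLt, h1]
    · calc x i < (((k i : ℕ):ℝ) + 1) * (M:ℝ)⁻¹ := h2
        _ ≤ (M:ℝ) * (M:ℝ)⁻¹ := by
            apply mul_le_mul_of_nonneg_right hkM (by positivity)
        _ = 1 := mul_inv_cancel₀ (ne_of_gt hMR)
  · intro hx
    have hch : ∀ i, ∃ n : ℕ, n < M ∧ (n : ℝ) * (M:ℝ)⁻¹ ≤ x i ∧ x i < ((n : ℝ) + 1) * (M:ℝ)⁻¹ :=
      fun i => stmt12_aux_floor M hM (x i) (hx i).1 (hx i).2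
    choose n hn h1 h2 using hch
    exact ⟨fun i => ⟨n i, hn i⟩, fun i => ⟨h1 i, h2 i⟩⟩

lemma stmt12_cube_disj (d M : ℕ) (hM : 0 < M) :
    Pairwise (Function.onFun Disjoint
      fun k : Fin d → Fin M => (stau d M k +ᵥ cubeS d ((M:ℝ)⁻¹))) := by
  have hMR : (0:ℝ) < (M:ℝ)⁻¹ := by
    have : (0:ℝ) < M := by exact_mod_cast hM
    positivity
  intro k k' hkk
  rw [Function.onFun, Set.disjoint_left]
  intro x hx hx'
  apply hkk
  funext i
  obtain ⟨h1, h2⟩ := (stmt12_mem_vadd_cube d M k x).mp hx i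
  obtain ⟨h3, h4⟩ := (stmt12_mem_vadd_cube d M k' x).mp hx' i
  exact Fin.ext (stmt12_aux_unique _ _ _ _ hMR h1 h2 h3 h4)

lemma stmt12_lat_add (d : ℕ) (k j : Fin d → ℤ) : lat d (k + j) = lat d k + lat d j := by
  ext i
  show ((k i + j i : ℤ) : ℝ) = (k i : ℝ) + (j i : ℝ)
  push_cast; ring

lemma stmt12_lat_vadd_latSet (d : ℕ) (K : Set (EuclideanSpace ℝ (Fin d))) (k : Fin d → ℤ) :
    lat d k +ᵥ latSet d K = latSet d K := by
  ext x
  simp only [latSet, Set.mem_vadd_set, mem_iUnion]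
  constructor
  · rintro ⟨y, ⟨j, ⟨c, hc, rfl⟩⟩, rfl⟩
    exact ⟨k + j, c, hc, by rw [stmt12_lat_add]; simp only [vadd_eq_add]; abel⟩
  · rintro ⟨j, c, hc, rfl⟩
    refine ⟨lat d (-k + j) + c, ⟨-k + j, c, hc, rfl⟩, ?_⟩
    have : lat d k + lat d (-k + j) = lat d j := by rw [← stmt12_lat_add, add_neg_cancel_left]
    simp only [vadd_eq_add, ← add_assoc, this]

lemma stmt12_smul_vadd_set {d : ℕ} (c : ℝ) (a : EuclideanSpace ℝ (Fin d))
    (s : Set (EuclideanSpace ℝ (Fin d))) :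
    c • (a +ᵥ s) = (c • a) +ᵥ (c • s) := by
  ext x
  simp only [mem_smul_set, Set.mem_vadd_set]
  constructor
  · rintro ⟨y, ⟨z, hz, rfl⟩, rfl⟩
    exact ⟨c • z, ⟨z, hz, rfl⟩, by simp [vadd_eq_add, smul_add]⟩
  · rintro ⟨y, ⟨z, hz, rfl⟩, rfl⟩
    exact ⟨a + z, ⟨z, hz, rfl⟩, by simp [vadd_eq_add, smul_add]⟩

lemma stmt12_stau_vadd_EM (d M : ℕ) (K : Set (EuclideanSpace ℝ (Fin d))) (k : Fin d → Fin M) :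
    stau d M k +ᵥ ((M:ℝ)⁻¹ • latSet d K) = (M:ℝ)⁻¹ • latSet d K := by
  rw [stau, ← stmt12_smul_vadd_set, stmt12_lat_vadd_latSet]

lemma stmt12_int_on_ball (d : ℕ) (w : EuclideanSpace ℝ (Fin d) → ℝ) (hwm : Measurable w)
    (hloc : ∀ C : Set (EuclideanSpace ℝ (Fin d)), IsCompact C →
      IntegrableOn (fun x => (w x) ^ 2) C)
    (ξ : EuclideanSpace ℝ (Fin d)) (R : ℝ) :
    IntegrableOn (fun p : EuclideanSpace ℝ (Fin d) × EuclideanSpace ℝ (Fin d) =>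
      (w p.1 - w p.2 + (inner ℝ ξ (p.1 - p.2) : ℝ)) ^ 2)
      ((closedBall (0 : EuclideanSpace ℝ (Fin d)) R) ×ˢ (closedBall 0 R)) volume := by
  set S := closedBall (0 : EuclideanSpace ℝ (Fin d)) R with hSdef
  have hSm : MeasurableSet S := measurableSet_closedBall
  have hfin : volume S < ⊤ := measure_closedBall_lt_top
  have hwS : IntegrableOn (fun x => w x ^ 2) S volume := hloc S (isCompact_closedBall _ _)
  have hone : Integrable (fun _ : EuclideanSpace ℝ (Fin d) => (1:ℝ)) (volume.restrict S) :=
    integrable_const_iff.mpr (Or.inr (isFiniteMeasure_restrict.mpr hfin.ne))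
  have h1 : IntegrableOn (fun p : EuclideanSpace ℝ (Fin d) × EuclideanSpace ℝ (Fin d) =>
      w p.1 ^ 2) (S ×ˢ S) volume := by
    rw [IntegrableOn, Measure.volume_eq_prod, ← Measure.prod_restrict]
    simpa using Integrable.mul_prod (L := ℝ) hwS hone
  have h2 : IntegrableOn (fun p : EuclideanSpace ℝ (Fin d) × EuclideanSpace ℝ (Fin d) =>
      w p.2 ^ 2) (S ×ˢ S) volume := by
    rw [IntegrableOn, Measure.volume_eq_prod, ← Measure.prod_restrict]
    simpa using Integrable.mul_prod (L := ℝ) hone hwS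
  have hprodfin : volume (S ×ˢ S) < ⊤ := by
    rw [Measure.volume_eq_prod, Measure.prod_prod]
    exact ENNReal.mul_lt_top hfin hfin
  have h3 : IntegrableOn (fun _ : EuclideanSpace ℝ (Fin d) × EuclideanSpace ℝ (Fin d) =>
      3 * (‖ξ‖ * (2 * R)) ^ 2) (S ×ˢ S) volume :=
    integrable_const_iff.mpr (Or.inr (isFiniteMeasure_restrict.mpr hprodfin.ne))
  have hdom : IntegrableOn (fun p : EuclideanSpace ℝ (Fin d) × EuclideanSpace ℝ (Fin d) =>
      3 * w p.1 ^ 2 + 3 * w p.2 ^ 2 + 3 * (‖ξ‖ * (2 * R)) ^ 2) (S ×ˢ S) volume :=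
    ((h1.const_mul 3).add (h2.const_mul 3)).add h3
  have hgm : Measurable (fun p : EuclideanSpace ℝ (Fin d) × EuclideanSpace ℝ (Fin d) =>
      (w p.1 - w p.2 + (inner ℝ ξ (p.1 - p.2) : ℝ)) ^ 2) := by
    apply Measurable.pow_const
    exact ((hwm.comp measurable_fst).sub (hwm.comp measurable_snd)).add
      ((Continuous.inner continuous_const (continuous_fst.sub continuous_snd)).measurable)
  refine Integrable.mono' hdom (hgm.aestronglyMeasurable.restrict) ?_
  refine ae_restrict_of_forall_mem (hSm.prod hSm) ?_
  rintro ⟨x, y⟩ ⟨hx, hy⟩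
  have hxn : ‖x‖ ≤ R := mem_closedBall_zero_iff.mp hx
  have hyn : ‖y‖ ≤ R := mem_closedBall_zero_iff.mp hy
  have hinner : |(inner ℝ ξ (x - y) : ℝ)| ≤ ‖ξ‖ * (2 * R) := by
    calc |(inner ℝ ξ (x - y) : ℝ)| ≤ ‖ξ‖ * ‖x - y‖ := abs_real_inner_le_norm _ _
      _ ≤ ‖ξ‖ * (2 * R) := by
        have : ‖x - y‖ ≤ ‖x‖ + ‖y‖ := norm_sub_le _ _
        have := norm_nonneg ξ
        nlinarith
  have ht2 : ((inner ℝ ξ (x - y) : ℝ)) ^ 2 ≤ (‖ξ‖ * (2 * R)) ^ 2 := by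
    have habs := abs_le.mp hinner
    nlinarith [habs.1, habs.2]
  simp only [Real.norm_eq_abs, abs_pow, sq_abs]
  nlinarith [ht2, sq_nonneg (w x + w y), sq_nonneg (w x - (inner ℝ ξ (x - y) : ℝ)),
    sq_nonneg (w y + (inner ℝ ξ (x - y) : ℝ))]

lemma stmt12_cube_norm (d : ℕ) (x : EuclideanSpace ℝ (Fin d)) (hx : x ∈ cubeS d 1) :
    ‖x‖ ≤ Real.sqrt d := by
  rw [EuclideanSpace.norm_eq]
  apply Real.sqrt_le_sqrt
  calc ∑ i, ‖x i‖ ^ 2 ≤ ∑ _i : Fin d, (1:ℝ) := by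
        apply Finset.sum_le_sum
        intro i _
        obtain ⟨h0, h1⟩ := hx i
        rw [Real.norm_eq_abs, sq_abs]
        nlinarith
    _ = d := by simp

instance stmt12_prodvolume_invariant (d : ℕ) :
    (volume : Measure (EuclideanSpace ℝ (Fin d) × EuclideanSpace ℝ (Fin d))).IsAddLeftInvariant :=
  Measure.prod.instIsAddLeftInvariant (μ := (volume : Measure (EuclideanSpace ℝ (Fin d))))
    (ν := (volume : Measure (EuclideanSpace ℝ (Fin d))))

end Stmt12Aux

/-- convexity (averaging) estimate for periodized test functions. -/
theorem stmt_12 (d : ℕ) (hd : 1 ≤ d)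
    (K : Set (EuclideanSpace ℝ (Fin d))) (hK : IsAdmissibleK d K)
    (M : ℕ) (hM : 0 < M)
    (w : EuclideanSpace ℝ (Fin d) → ℝ) (hwm : Measurable w)
    (hper : ∀ x : EuclideanSpace ℝ (Fin d), ∀ k : Fin d → ℤ, w (x + lat d k) = w x)
    (hloc : ∀ C : Set (EuclideanSpace ℝ (Fin d)), IsCompact C →
      IntegrableOn (fun x => (w x) ^ 2) C)
    (wt : EuclideanSpace ℝ (Fin d) → ℝ)
    (hwt : ∀ x, wt x = (M : ℝ) ^ (-(d:ℤ)) *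
      ∑ k : Fin d → Fin M, w (x + (M : ℝ)⁻¹ • lat d (fun i => (k i : ℤ)))) :
    ∀ r > (0:ℝ), ∀ ξ : EuclideanSpace ℝ (Fin d),
      (∫ p in ((cubeS d ((M:ℝ)⁻¹) ∩ (M:ℝ)⁻¹ • latSet d K) ×ˢ ((M:ℝ)⁻¹ • latSet d K)) ∩
          {p : EuclideanSpace ℝ (Fin d) × EuclideanSpace ℝ (Fin d) | dist p.1 p.2 < r},
          (wt p.1 - wt p.2 + (inner ℝ ξ (p.1 - p.2) : ℝ)) ^ 2)
      ≤ (M : ℝ) ^ (-(d:ℤ)) *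
        ∫ p in ((cubeS d 1 ∩ (M:ℝ)⁻¹ • latSet d K) ×ˢ ((M:ℝ)⁻¹ • latSet d K)) ∩
          {p : EuclideanSpace ℝ (Fin d) × EuclideanSpace ℝ (Fin d) | dist p.1 p.2 < r},
          (w p.1 - w p.2 + (inner ℝ ξ (p.1 - p.2) : ℝ)) ^ 2 := by
  intro r hr ξ
  classical
  have hMR : (0:ℝ) < M := by exact_mod_cast hM
  obtain ⟨⟨U, hUopen, hUconn, hUbdd, hKU⟩, hfr, hdisjK⟩ := hK
  have hKm : MeasurableSet K := (hKU ▸ isClosed_closure).measurableSet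
  have hlatm : MeasurableSet (latSet d K) :=
    MeasurableSet.iUnion fun k => hKm.const_vadd _
  have hEMm : MeasurableSet ((M:ℝ)⁻¹ • latSet d K) := hlatm.const_smul₀ _
  have hcubem : ∀ s : ℝ, MeasurableSet (cubeS d s) := by
    intro s
    have he : cubeS d s = ⋂ i, ({x : EuclideanSpace ℝ (Fin d) | 0 ≤ x i} ∩
        {x : EuclideanSpace ℝ (Fin d) | x i < s}) := by
      ext x; simp [cubeS, Set.mem_iInter, Set.mem_setOf_eq]
    rw [he]
    refine MeasurableSet.iInter fun i => ?_
    have hcoord : Measurable fun x : EuclideanSpace ℝ (Fin d) => x i :=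
      (measurable_pi_apply i).comp (WithLp.measurable_ofLp 2 _)
    exact (measurableSet_le measurable_const hcoord).inter
      (measurableSet_lt hcoord measurable_const)
  have hdistm : MeasurableSet {p : EuclideanSpace ℝ (Fin d) × EuclideanSpace ℝ (Fin d) |
      dist p.1 p.2 < r} :=
    (isOpen_lt (continuous_fst.dist continuous_snd) continuous_const).measurableSet
  -- abbreviations
  set EM : Set (EuclideanSpace ℝ (Fin d)) := (M:ℝ)⁻¹ • latSet d K with hEMdef
  set τ : (Fin d → Fin M) → EuclideanSpace ℝ (Fin d) := stau d M with hτdef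
  set A : Set (EuclideanSpace ℝ (Fin d) × EuclideanSpace ℝ (Fin d)) :=
    ((cubeS d ((M:ℝ)⁻¹) ∩ EM) ×ˢ EM) ∩
      {p : EuclideanSpace ℝ (Fin d) × EuclideanSpace ℝ (Fin d) | dist p.1 p.2 < r} with hAdef
  set B : Set (EuclideanSpace ℝ (Fin d) × EuclideanSpace ℝ (Fin d)) :=
    ((cubeS d 1 ∩ EM) ×ˢ EM) ∩
      {p : EuclideanSpace ℝ (Fin d) × EuclideanSpace ℝ (Fin d) | dist p.1 p.2 < r} with hBdef
  have hAm : MeasurableSet A :=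
    (((hcubem _).inter hEMm).prod hEMm).inter hdistm
  have hBm : MeasurableSet B :=
    (((hcubem _).inter hEMm).prod hEMm).inter hdistm
  -- membership in translated sets
  have hvaddmem : ∀ (c x y : EuclideanSpace ℝ (Fin d))
      (S : Set (EuclideanSpace ℝ (Fin d) × EuclideanSpace ℝ (Fin d))),
      ((x, y) ∈ (c, c) +ᵥ S ↔ (-c + x, -c + y) ∈ S) := by
    intro c x y S
    rw [mem_vadd_set_iff_neg_vadd_mem]; rfl
  have hEMinv : ∀ (k : Fin d → Fin M) (x : EuclideanSpace ℝ (Fin d)),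
      x ∈ EM ↔ -τ k + x ∈ EM := by
    intro k x
    conv_lhs => rw [hEMdef, ← stmt12_stau_vadd_EM d M K k]
    rw [mem_vadd_set_iff_neg_vadd_mem]
    rfl
  have hcubeinv : ∀ (k : Fin d → Fin M) (x : EuclideanSpace ℝ (Fin d)),
      x ∈ τ k +ᵥ cubeS d ((M:ℝ)⁻¹) ↔ -τ k + x ∈ cubeS d ((M:ℝ)⁻¹) := by
    intro k x
    rw [mem_vadd_set_iff_neg_vadd_mem]
    rfl
  -- decomposition of B
  have hBdecomp : B = ⋃ k : Fin d → Fin M, ((τ k, τ k) +ᵥ A) := by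
    ext ⟨x, y⟩
    simp only [mem_iUnion, hBdef, hAdef, Set.mem_inter_iff, Set.mem_prod, Set.mem_setOf_eq]
    constructor
    · rintro ⟨⟨⟨hx1, hx2⟩, hy⟩, hdist⟩
      rw [← stmt12_cube_decomp d M hM] at hx1
      obtain ⟨k, hk⟩ := mem_iUnion.mp hx1
      refine ⟨k, ?_⟩
      rw [hvaddmem]
      simp only [Set.mem_inter_iff, Set.mem_prod, Set.mem_setOf_eq]
      refine ⟨⟨⟨(hcubeinv k x).mp hk, (hEMinv k x).mp hx2⟩, (hEMinv k y).mp hy⟩, ?_⟩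
      show dist (-τ k + x) (-τ k + y) < r
      rwa [dist_add_left]
    · rintro ⟨k, hk⟩
      rw [hvaddmem] at hk
      simp only [Set.mem_inter_iff, Set.mem_prod, Set.mem_setOf_eq] at hk
      obtain ⟨⟨⟨h1, h2⟩, h3⟩, h4⟩ := hk
      have hdist : dist x y < r := by
        have : dist (-τ k + x) (-τ k + y) < r := h4
        rwa [dist_add_left] at this
      refine ⟨⟨⟨?_, (hEMinv k x).mpr h2⟩, (hEMinv k y).mpr h3⟩, hdist⟩
      rw [← stmt12_cube_decomp d M hM]
      exact mem_iUnion.mpr ⟨k, (hcubeinv k x).mpr h1⟩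
  -- disjointness of the pieces
  have hpdisj : Pairwise (Function.onFun Disjoint
      fun k : Fin d → Fin M => ((τ k, τ k) +ᵥ A)) := by
    intro k k' hkk
    rw [Function.onFun, Set.disjoint_left]
    rintro ⟨x, y⟩ h1 h2
    rw [hvaddmem] at h1 h2
    simp only [hAdef, Set.mem_inter_iff, Set.mem_prod, Set.mem_setOf_eq] at h1 h2
    have e1 : x ∈ τ k +ᵥ cubeS d ((M:ℝ)⁻¹) := (hcubeinv k x).mpr h1.1.1.1
    have e2 : x ∈ τ k' +ᵥ cubeS d ((M:ℝ)⁻¹) := (hcubeinv k' x).mpr h2.1.1.1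
    exact Set.disjoint_left.mp (stmt12_cube_disj d M hM hkk) e1 e2
  -- B is bounded
  set R : ℝ := Real.sqrt d + r with hRdef
  have hBsub : B ⊆ (closedBall (0 : EuclideanSpace ℝ (Fin d)) R) ×ˢ (closedBall 0 R) := by
    rintro ⟨x, y⟩ ⟨⟨⟨hx1, _⟩, _⟩, hdist⟩
    have hxn : ‖x‖ ≤ Real.sqrt d := stmt12_cube_norm d x hx1
    have hdist' : dist x y < r := hdist
    refine Set.mem_prod.mpr ⟨mem_closedBall_zero_iff.mpr ?_, mem_closedBall_zero_iff.mpr ?_⟩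
    · show ‖x‖ ≤ R
      rw [hRdef]; linarith
    · show ‖y‖ ≤ R
      have h1 : dist y 0 ≤ dist y x + dist x 0 := dist_triangle _ _ _
      rw [dist_zero_right, dist_zero_right, dist_comm] at h1
      rw [hRdef]; linarith [h1, hdist']
  -- integrability over B
  have hBint : IntegrableOn (fun p : EuclideanSpace ℝ (Fin d) × EuclideanSpace ℝ (Fin d) =>
      (w p.1 - w p.2 + (inner ℝ ξ (p.1 - p.2) : ℝ)) ^ 2) B volume :=
    (stmt12_int_on_ball d w hwm hloc ξ R).mono_set hBsub
  -- translation machinery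
  have himg : ∀ (c : EuclideanSpace ℝ (Fin d) × EuclideanSpace ℝ (Fin d))
      (S : Set (EuclideanSpace ℝ (Fin d) × EuclideanSpace ℝ (Fin d))),
      (fun p => c + p) '' S = c +ᵥ S := by
    intro c S
    rw [show (fun p => c + p) = (fun p => c +ᵥ p) from rfl, Set.image_vadd]
  have hMP : ∀ c : EuclideanSpace ℝ (Fin d) × EuclideanSpace ℝ (Fin d),
      MeasurePreserving (fun p => c + p) volume volume :=
    fun c => measurePreserving_add_left volume c
  have hemb : ∀ c : EuclideanSpace ℝ (Fin d) × EuclideanSpace ℝ (Fin d),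
      MeasurableEmbedding (fun p => c + p) :=
    fun c => (MeasurableEquiv.addLeft c).measurableEmbedding
  have hpieceint : ∀ k : Fin d → Fin M,
      IntegrableOn (fun p : EuclideanSpace ℝ (Fin d) × EuclideanSpace ℝ (Fin d) =>
        (w p.1 - w p.2 + (inner ℝ ξ (p.1 - p.2) : ℝ)) ^ 2) ((τ k, τ k) +ᵥ A) volume :=
    fun k => hBint.mono_set (hBdecomp ▸ subset_iUnion
      (fun k : Fin d → Fin M => ((τ k, τ k) +ᵥ A)) k)
  have hcompint : ∀ k : Fin d → Fin M,
      IntegrableOn (fun p : EuclideanSpace ℝ (Fin d) × EuclideanSpace ℝ (Fin d) =>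
        (w ((τ k, τ k) + p).1 - w ((τ k, τ k) + p).2 +
          (inner ℝ ξ (((τ k, τ k) + p).1 - ((τ k, τ k) + p).2) : ℝ)) ^ 2) A volume := by
    intro k
    have := ((hMP ((τ k, τ k))).integrableOn_image (hemb _)).mp
      (by rw [himg]; exact hpieceint k)
    exact this
  have hchange : ∀ k : Fin d → Fin M,
      (∫ p in ((τ k, τ k) +ᵥ A),
        (w p.1 - w p.2 + (inner ℝ ξ (p.1 - p.2) : ℝ)) ^ 2) =
      ∫ p in A, (w ((τ k, τ k) + p).1 - w ((τ k, τ k) + p).2 +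
          (inner ℝ ξ (((τ k, τ k) + p).1 - ((τ k, τ k) + p).2) : ℝ)) ^ 2 := by
    intro k
    rw [← himg]
    exact (hMP _).setIntegral_image_emb (hemb _) _ _
  have hAvm : ∀ k : Fin d → Fin M, MeasurableSet ((τ k, τ k) +ᵥ A) :=
    fun k => hAm.const_vadd _
  have hsum : (∫ p in B, (w p.1 - w p.2 + (inner ℝ ξ (p.1 - p.2) : ℝ)) ^ 2) =
      ∑ k : Fin d → Fin M, ∫ p in ((τ k, τ k) +ᵥ A),
        (w p.1 - w p.2 + (inner ℝ ξ (p.1 - p.2) : ℝ)) ^ 2 := by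
    rw [hBdecomp]
    have hu : (⋃ k : Fin d → Fin M, ((τ k, τ k) +ᵥ A)) =
        ⋃ k ∈ (Finset.univ : Finset (Fin d → Fin M)), ((τ k, τ k) +ᵥ A) := by
      simp
    rw [hu, integral_biUnion_finset Finset.univ (fun k _ => hAvm k)
      (by simpa using hpdisj.set_pairwise _) (fun k _ => hpieceint k)]
  -- cardinality
  have hNe : Nonempty (Fin M) := ⟨⟨0, hM⟩⟩
  have hNcard : ((Fintype.card (Fin d → Fin M) : ℕ) : ℝ) = (M:ℝ) ^ d := by
    rw [Fintype.card_fun]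
    push_cast
    simp
  have hNpos : (0:ℝ) < ((Fintype.card (Fin d → Fin M) : ℕ) : ℝ) := by
    rw [hNcard]; positivity
  have hMd : (M:ℝ) ^ (-(d:ℤ)) = (((Fintype.card (Fin d → Fin M) : ℕ) : ℝ))⁻¹ := by
    rw [hNcard, zpow_neg, zpow_natCast]
  -- pointwise representation and convexity
  have hrepr : ∀ p : EuclideanSpace ℝ (Fin d) × EuclideanSpace ℝ (Fin d),
      wt p.1 - wt p.2 + (inner ℝ ξ (p.1 - p.2) : ℝ) =
      (((Fintype.card (Fin d → Fin M) : ℕ) : ℝ))⁻¹ *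
        ∑ k : Fin d → Fin M, (w ((τ k, τ k) + p).1 - w ((τ k, τ k) + p).2 +
          (inner ℝ ξ (((τ k, τ k) + p).1 - ((τ k, τ k) + p).2) : ℝ)) := by
    rintro ⟨x, y⟩
    have hg : ∀ k : Fin d → Fin M,
        (w ((τ k, τ k) + (x, y)).1 - w ((τ k, τ k) + (x, y)).2 +
          (inner ℝ ξ (((τ k, τ k) + (x, y)).1 - ((τ k, τ k) + (x, y)).2) : ℝ)) =
        w (x + τ k) - w (y + τ k) + (inner ℝ ξ (x - y) : ℝ) := by
      intro k
      show w (τ k + x) - w (τ k + y) + (inner ℝ ξ ((τ k + x) - (τ k + y)) : ℝ) = _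
      rw [add_sub_add_left_eq_sub, add_comm (τ k) x, add_comm (τ k) y]
    simp only [hg]
    rw [Finset.sum_add_distrib, Finset.sum_sub_distrib, Finset.sum_const, Finset.card_univ,
      nsmul_eq_mul]
    show wt x - wt y + (inner ℝ ξ (x - y) : ℝ) = _
    rw [hwt x, hwt y, hMd]
    have hτk : ∀ k : Fin d → Fin M,
        (M:ℝ)⁻¹ • lat d (fun i => ((k i : ℤ))) = τ k := fun k => rfl
    simp only [hτk]
    have hNne : (((Fintype.card (Fin d → Fin M) : ℕ) : ℝ)) ≠ 0 := ne_of_gt hNpos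
    field_simp
  have hpoint : ∀ p : EuclideanSpace ℝ (Fin d) × EuclideanSpace ℝ (Fin d),
      (wt p.1 - wt p.2 + (inner ℝ ξ (p.1 - p.2) : ℝ)) ^ 2 ≤
      (M:ℝ) ^ (-(d:ℤ)) * ∑ k : Fin d → Fin M,
        (w ((τ k, τ k) + p).1 - w ((τ k, τ k) + p).2 +
          (inner ℝ ξ (((τ k, τ k) + p).1 - ((τ k, τ k) + p).2) : ℝ)) ^ 2 := by
    intro p
    rw [hrepr p, hMd, mul_pow]
    have hCS : (∑ k : Fin d → Fin M, (w ((τ k, τ k) + p).1 - w ((τ k, τ k) + p).2 +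
          (inner ℝ ξ (((τ k, τ k) + p).1 - ((τ k, τ k) + p).2) : ℝ))) ^ 2 ≤
        (((Fintype.card (Fin d → Fin M) : ℕ) : ℝ)) *
        ∑ k : Fin d → Fin M, (w ((τ k, τ k) + p).1 - w ((τ k, τ k) + p).2 +
          (inner ℝ ξ (((τ k, τ k) + p).1 - ((τ k, τ k) + p).2) : ℝ)) ^ 2 := by
      have := sq_sum_le_card_mul_sum_sq (s := (Finset.univ : Finset (Fin d → Fin M)))
        (f := fun k => (w ((τ k, τ k) + p).1 - w ((τ k, τ k) + p).2 +
          (inner ℝ ξ (((τ k, τ k) + p).1 - ((τ k, τ k) + p).2) : ℝ)))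
      simpa [Finset.card_univ] using this
    calc ((((Fintype.card (Fin d → Fin M) : ℕ) : ℝ))⁻¹) ^ 2 *
          (∑ k : Fin d → Fin M, (w ((τ k, τ k) + p).1 - w ((τ k, τ k) + p).2 +
            (inner ℝ ξ (((τ k, τ k) + p).1 - ((τ k, τ k) + p).2) : ℝ))) ^ 2
        ≤ ((((Fintype.card (Fin d → Fin M) : ℕ) : ℝ))⁻¹) ^ 2 *
          ((((Fintype.card (Fin d → Fin M) : ℕ) : ℝ)) *
          ∑ k : Fin d → Fin M, (w ((τ k, τ k) + p).1 - w ((τ k, τ k) + p).2 +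
            (inner ℝ ξ (((τ k, τ k) + p).1 - ((τ k, τ k) + p).2) : ℝ)) ^ 2) := by
          exact mul_le_mul_of_nonneg_left hCS (by positivity)
      _ = (((Fintype.card (Fin d → Fin M) : ℕ) : ℝ))⁻¹ *
          ∑ k : Fin d → Fin M, (w ((τ k, τ k) + p).1 - w ((τ k, τ k) + p).2 +
            (inner ℝ ξ (((τ k, τ k) + p).1 - ((τ k, τ k) + p).2) : ℝ)) ^ 2 := by
          have hNne : (((Fintype.card (Fin d → Fin M) : ℕ) : ℝ)) ≠ 0 := ne_of_gt hNpos
          field_simp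
  -- integrability of the dominating function on A
  have hdomint : IntegrableOn (fun p : EuclideanSpace ℝ (Fin d) × EuclideanSpace ℝ (Fin d) =>
      (M:ℝ) ^ (-(d:ℤ)) * ∑ k : Fin d → Fin M,
        (w ((τ k, τ k) + p).1 - w ((τ k, τ k) + p).2 +
          (inner ℝ ξ (((τ k, τ k) + p).1 - ((τ k, τ k) + p).2) : ℝ)) ^ 2) A volume := by
    apply Integrable.const_mul
    exact integrable_finset_sum _ (fun k _ => hcompint k)
  -- measurability of wt
  have hwtm : Measurable wt := by
    have hwteq : wt = fun x => (M : ℝ) ^ (-(d:ℤ)) *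
        ∑ k : Fin d → Fin M, w (x + (M : ℝ)⁻¹ • lat d (fun i => (k i : ℤ))) := funext hwt
    rw [hwteq]
    exact measurable_const.mul
      (Finset.measurable_sum _ fun k _ => hwm.comp (measurable_add_const _))
  have hLHSm : Measurable (fun p : EuclideanSpace ℝ (Fin d) × EuclideanSpace ℝ (Fin d) =>
      (wt p.1 - wt p.2 + (inner ℝ ξ (p.1 - p.2) : ℝ)) ^ 2) := by
    apply Measurable.pow_const
    exact ((hwtm.comp measurable_fst).sub (hwtm.comp measurable_snd)).add
      ((Continuous.inner continuous_const (continuous_fst.sub continuous_snd)).measurable)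
  have hLHSint : IntegrableOn (fun p : EuclideanSpace ℝ (Fin d) × EuclideanSpace ℝ (Fin d) =>
      (wt p.1 - wt p.2 + (inner ℝ ξ (p.1 - p.2) : ℝ)) ^ 2) A volume := by
    apply Integrable.mono' hdomint (hLHSm.aestronglyMeasurable.restrict)
    apply Filter.Eventually.of_forall
    intro p
    rw [Real.norm_eq_abs, abs_of_nonneg (sq_nonneg _)]
    exact hpoint p
  -- main computation
  calc (∫ p in A, (wt p.1 - wt p.2 + (inner ℝ ξ (p.1 - p.2) : ℝ)) ^ 2)
      ≤ ∫ p in A, (M:ℝ) ^ (-(d:ℤ)) * ∑ k : Fin d → Fin M,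
          (w ((τ k, τ k) + p).1 - w ((τ k, τ k) + p).2 +
            (inner ℝ ξ (((τ k, τ k) + p).1 - ((τ k, τ k) + p).2) : ℝ)) ^ 2 :=
        setIntegral_mono_on hLHSint hdomint hAm (fun p _ => hpoint p)
    _ = (M:ℝ) ^ (-(d:ℤ)) * ∑ k : Fin d → Fin M, ∫ p in A,
          (w ((τ k, τ k) + p).1 - w ((τ k, τ k) + p).2 +
            (inner ℝ ξ (((τ k, τ k) + p).1 - ((τ k, τ k) + p).2) : ℝ)) ^ 2 := by
        rw [integral_const_mul, integral_finset_sum _ (fun k _ => hcompint k)]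
    _ = (M:ℝ) ^ (-(d:ℤ)) * ∑ k : Fin d → Fin M, ∫ p in ((τ k, τ k) +ᵥ A),
          (w p.1 - w p.2 + (inner ℝ ξ (p.1 - p.2) : ℝ)) ^ 2 := by
        congr 1
        exact Finset.sum_congr rfl (fun k _ => (hchange k).symm)
    _ = (M:ℝ) ^ (-(d:ℤ)) * ∫ p in B,
          (w p.1 - w p.2 + (inner ℝ ξ (p.1 - p.2) : ℝ)) ^ 2 := by
        rw [hsum]
end
end
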